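/- If a, b, c are symmetric positive definite real matrices of the same dimension and the product abc is symmetric, then abc is positive definite. -/

import Mathlib

open Matrix
open scoped MatrixOrder

private lemma wig_conjT_eq_transpose {r : ℕ} (M : Matrix (Fin r) (Fin r) ℝ) : Mᴴ = Mᵀ := by
  ext i j; simp [conjTranspose_apply]

/-- Congruence by an invertible matrix preserves positive definiteness (real case). -/
private lemma wig_posDef_conj {r : ℕ} {A P : Matrix (Fin r) (Fin r) ℝ}
    (hA : A.PosDef) (hP : IsUnit P.det) : (P * A * Pᵀ).PosDef := by
  refine Matrix.PosDef.of_dotProduct_mulVec_pos ?_ fun x hx => ?_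
  · have := (hA.posSemidef.mul_mul_conjTranspose_same P).1
    rwa [wig_conjT_eq_transpose] at this
  · have hPt : IsUnit Pᵀ := (Matrix.isUnit_iff_isUnit_det _).mpr (by simpa using hP)
    have hx' : Pᵀ *ᵥ x ≠ 0 := by
      intro h0
      exact hx (Matrix.mulVec_injective_iff_isUnit.mpr hPt (by simpa using h0))
    have h2 := hA.dotProduct_mulVec_pos hx'
    have e1 : star x ⬝ᵥ (P * A * Pᵀ) *ᵥ x = star (Pᵀ *ᵥ x) ⬝ᵥ A *ᵥ (Pᵀ *ᵥ x) := by
      rw [star_trivial, star_trivial, ← Matrix.mulVec_mulVec, ← Matrix.mulVec_mulVec,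
        Matrix.dotProduct_mulVec, ← Matrix.mulVec_transpose]
    rw [e1]
    exact h2

/-- Every real spectral value of a positive definite real matrix is positive. -/
private lemma wig_spectrum_pos {r : ℕ} {N : Matrix (Fin r) (Fin r) ℝ} (hN : N.PosDef)
    {μ : ℝ} (hμ : μ ∈ spectrum ℝ N) : 0 < μ := by
  rw [spectrum.mem_iff] at hμ
  have hdet : (algebraMap ℝ (Matrix (Fin r) (Fin r) ℝ) μ - N).det = 0 := by
    by_contra hd
    exact hμ ((Matrix.isUnit_iff_isUnit_det _).mpr (isUnit_iff_ne_zero.mpr hd))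
  obtain ⟨v, hv, hv0⟩ := (Matrix.exists_mulVec_eq_zero_iff).mpr hdet
  have hNv : N *ᵥ v = μ • v := by
    have : (algebraMap ℝ (Matrix (Fin r) (Fin r) ℝ) μ) *ᵥ v - N *ᵥ v = 0 := by
      rw [← Matrix.sub_mulVec, hv0]
    have h2 : (algebraMap ℝ (Matrix (Fin r) (Fin r) ℝ) μ) *ᵥ v = μ • v := by
      simp [Matrix.algebraMap_eq_diagonal, Matrix.diagonal_mulVec_single]  -- try
      ext i
      simp [Matrix.mulVec_diagonal, Pi.algebraMap_apply, Algebra.algebraMap_self_apply]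
    rw [h2] at this
    exact (sub_eq_zero.mp this).symm
  have hp := hN.dotProduct_mulVec_pos hv
  rw [hNv, star_trivial] at hp
  have hps : v ⬝ᵥ (μ • v) = μ * (v ⬝ᵥ v) := by
    simp [dotProduct, Finset.mul_sum, mul_comm, mul_left_comm]
  rw [hps] at hp
  have hd0 : 0 ≤ v ⬝ᵥ v := Finset.sum_nonneg fun i _ => mul_self_nonneg _
  nlinarith


/-- A real symmetric matrix whose real spectrum is positive is positive definite. -/
private lemma wig_posDef_of_spectrum_pos {r : ℕ} {M : Matrix (Fin r) (Fin r) ℝ}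
    (hM : M.IsHermitian) (h : ∀ μ ∈ spectrum ℝ M, 0 < μ) : M.PosDef := by
  have hd : (Matrix.diagonal (RCLike.ofReal ∘ hM.eigenvalues) : Matrix (Fin r) (Fin r) ℝ).PosDef :=
    Matrix.PosDef.diagonal fun i => h _ (hM.eigenvalues_mem_spectrum_real i)
  have hU : IsUnit ((hM.eigenvectorUnitary : Matrix (Fin r) (Fin r) ℝ)).det :=
    Matrix.UnitaryGroup.det_isUnit hM.eigenvectorUnitary
  have := wig_posDef_conj hd hU
  rw [← wig_conjT_eq_transpose] at this
  have hst : ((hM.eigenvectorUnitary : Matrix (Fin r) (Fin r) ℝ))ᴴ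
      = star (hM.eigenvectorUnitary : Matrix (Fin r) (Fin r) ℝ) := rfl
  rw [hst] at this
  have hspec := hM.spectral_theorem
  rw [Unitary.conjStarAlgAut_apply] at hspec
  rwa [← hspec] at this

/-- Two-matrix Wigner lemma: the product of two positive definite real matrices
is positive definite whenever it is symmetric. -/
private lemma wig_mul_posDef {r : ℕ} {A B : Matrix (Fin r) (Fin r) ℝ}
    (hA : A.PosDef) (hB : B.PosDef) (hS : (A * B).IsSymm) : (A * B).PosDef := by
  classical
  set t := CFC.sqrt A with ht_def
  have htt : t * t = A := CFC.sqrt_mul_sqrt_self A hA.posSemidef.nonneg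
  have htH : t.IsHermitian := (CFC.sqrt_nonneg A).posSemidef.1
  have htT : tᵀ = t := by rw [← wig_conjT_eq_transpose]; exact htH
  have htdet : IsUnit t.det := by
    have : t.det * t.det = A.det := by rw [← Matrix.det_mul, htt]
    have hApos := hA.det_pos
    refine isUnit_iff_ne_zero.mpr fun h0 => ?_
    rw [h0, mul_zero] at this
    exact hApos.ne (this)
  have htu : IsUnit t := (Matrix.isUnit_iff_isUnit_det _).mpr htdet
  have hC : (t * B * t).PosDef := by
    have := wig_posDef_conj hB htdet
    rwa [htT] at this
  -- A * B = t * (t * B * t) * t⁻¹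
  have hti : t * t⁻¹ = 1 := Matrix.mul_nonsing_inv _ htdet
  have key : A * B = t * (t * B * t) * t⁻¹ := by
    calc A * B = t * t * B * (t * t⁻¹) := by rw [hti, htt, mul_one]
    _ = t * (t * B * t) * t⁻¹ := by simp only [Matrix.mul_assoc]
  -- spectra agree
  obtain ⟨u, hu⟩ := htu
  have hsp : spectrum ℝ (A * B) = spectrum ℝ (t * B * t) := by
    rw [key, ← hu, ← Matrix.coe_units_inv]
    exact spectrum.units_conjugate
  have hherm : (A * B).IsHermitian := by
    rw [Matrix.IsHermitian, wig_conjT_eq_transpose]; exact hS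
  exact wig_posDef_of_spectrum_pos hherm fun μ hμ => wig_spectrum_pos hC (hsp ▸ hμ)

/-- Wigner's theorem: if `a`, `b`, `c` are real symmetric positive definite
matrices of the same dimension and the product `a * b * c` is symmetric,
then `a * b * c` is positive definite. -/
theorem posDef_of_symm_triple_product {r : ℕ}
    (a b c : Matrix (Fin r) (Fin r) ℝ)
    (ha : a.PosDef) (hb : b.PosDef) (hc : c.PosDef)
    (h : (a * b * c).IsSymm) :
    (a * b * c).PosDef := by
  classical
  set s := CFC.sqrt a with hs_def
  have hss : s * s = a := CFC.sqrt_mul_sqrt_self a ha.posSemidef.nonneg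
  have hsH : s.IsHermitian := (CFC.sqrt_nonneg a).posSemidef.1
  have hsT : sᵀ = s := by rw [← wig_conjT_eq_transpose]; exact hsH
  have hsdet : IsUnit s.det := by
    have hmul : s.det * s.det = a.det := by rw [← Matrix.det_mul, hss]
    have hApos := ha.det_pos
    refine isUnit_iff_ne_zero.mpr fun h0 => ?_
    rw [h0, mul_zero] at hmul
    exact hApos.ne hmul
  have hsi : s * s⁻¹ = 1 := Matrix.mul_nonsing_inv _ hsdet
  have his : s⁻¹ * s = 1 := Matrix.nonsing_inv_mul _ hsdet
  have hinvT : (s⁻¹)ᵀ = s⁻¹ := by rw [Matrix.transpose_nonsing_inv, hsT]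
  have hinvdet : IsUnit (s⁻¹).det := Matrix.isUnit_nonsing_inv_det _ hsdet
  -- the two positive definite factors
  have hA' : (s * b * s).PosDef := by
    have := wig_posDef_conj hb hsdet; rwa [hsT] at this
  have hB' : (s⁻¹ * c * s⁻¹).PosDef := by
    have := wig_posDef_conj hc hinvdet; rwa [hinvT] at this
  -- the congruence-reduced matrix
  have hPeq : (s * b * s) * (s⁻¹ * c * s⁻¹) = s⁻¹ * (a * b * c) * s⁻¹ := by
    calc (s * b * s) * (s⁻¹ * c * s⁻¹)
        = s * b * (s * s⁻¹) * c * s⁻¹ := by simp only [Matrix.mul_assoc]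
      _ = s * b * c * s⁻¹ := by rw [hsi, Matrix.mul_one]
      _ = (s⁻¹ * s) * (s * b * c * s⁻¹) := by rw [his, Matrix.one_mul]
      _ = s⁻¹ * (a * b * c) * s⁻¹ := by rw [← hss]; simp only [Matrix.mul_assoc]
  have hPsymm : ((s * b * s) * (s⁻¹ * c * s⁻¹)).IsSymm := by
    rw [hPeq, Matrix.IsSymm]
    calc (s⁻¹ * (a * b * c) * s⁻¹)ᵀ
        = (s⁻¹)ᵀ * (a * b * c)ᵀ * (s⁻¹)ᵀ := by
          rw [Matrix.transpose_mul, Matrix.transpose_mul]; simp only [Matrix.mul_assoc]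
      _ = s⁻¹ * (a * b * c) * s⁻¹ := by rw [hinvT, h]
  have hP : ((s * b * s) * (s⁻¹ * c * s⁻¹)).PosDef := wig_mul_posDef hA' hB' hPsymm
  rw [hPeq] at hP
  have hfin := wig_posDef_conj hP hsdet
  rw [hsT] at hfin
  have : s * (s⁻¹ * (a * b * c) * s⁻¹) * s = a * b * c := by
    calc s * (s⁻¹ * (a * b * c) * s⁻¹) * s
        = (s * s⁻¹) * (a * b * c) * (s⁻¹ * s) := by simp only [Matrix.mul_assoc]
      _ = a * b * c := by rw [hsi, his, Matrix.one_mul, Matrix.mul_one]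
  rwa [this] at hfin
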